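/- Let X_{t+1} = X_t(Id − E[A_t]) + B_t be a one-sided decay recursion with ‖A_t‖₂ ≤ 2 a.s. Suppose for some constants X̄ ≥ 0, C > 0 and exponents 0 < α < 1 < β: log ‖(∏_{r=s}^t (Id − E[A_r])) Q‖₂ < X̄ − C ∫_s^{t+1} r^{−α} dr for all s ≤ t, and ‖B_t‖_F = O(t^{−β}). Then ‖X_t Q‖_F = O(t^{α−β}). -/

import Mathlib

open MeasureTheory ProbabilityTheory Matrix Filter Asymptotics

noncomputable def frobNorm {m n : ℕ} (A : Matrix (Fin m) (Fin n) ℝ) : ℝ :=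
  Real.sqrt (∑ i, ∑ j, (A i j) ^ 2)

noncomputable def specNorm {m n : ℕ} (A : Matrix (Fin m) (Fin n) ℝ) : ℝ :=
  ‖(LinearMap.toContinuousLinearMap
    (Matrix.toEuclideanLin A : EuclideanSpace ℝ (Fin n) →ₗ[ℝ] EuclideanSpace ℝ (Fin m)))‖

/-- Entrywise expectation of a random matrix. -/
noncomputable def mExp {Ω : Type*} [MeasureSpace Ω] {m n : ℕ}
    (M : Ω → Matrix (Fin m) (Fin n) ℝ) : Matrix (Fin m) (Fin n) ℝ :=
  Matrix.of fun i j => ∫ ω, M ω i j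

/-- The ordered product `M t * M (t+1) * ⋯ * M T`. -/
noncomputable def ordProd {n : ℕ} (M : ℕ → Matrix (Fin n) (Fin n) ℝ) (t T : ℕ) :
    Matrix (Fin n) (Fin n) ℝ :=
  ((List.range (T + 1 - t)).map (fun k => M (t + k))).prod

section Spec
open scoped Matrix.Norms.L2Operator

lemma specNorm_eq {m n : ℕ} (A : Matrix (Fin m) (Fin n) ℝ) : specNorm A = ‖A‖ := rfl

lemma specNorm_nonneg {m n : ℕ} (A : Matrix (Fin m) (Fin n) ℝ) : 0 ≤ specNorm A :=
  norm_nonneg _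

lemma conjT_eq_T {m n : ℕ} (A : Matrix (Fin m) (Fin n) ℝ) : Aᴴ = Aᵀ := by
  ext i j; simp [conjTranspose_apply]

lemma specNorm_transpose {n : ℕ} (A : Matrix (Fin n) (Fin n) ℝ) : specNorm Aᵀ = specNorm A := by
  rw [specNorm_eq, specNorm_eq, ← conjT_eq_T, Matrix.l2_opNorm_conjTranspose]

lemma specNorm_proj_le_one {n : ℕ} (Q : Matrix (Fin n) (Fin n) ℝ)
    (hQsymm : Qᵀ = Q) (hQproj : Q * Q = Q) : specNorm Q ≤ 1 := by
  have h1 : specNorm Q * specNorm Q = specNorm Q := by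
    rw [specNorm_eq, ← Matrix.l2_opNorm_conjTranspose_mul_self Q, conjT_eq_T, hQsymm, hQproj]
  nlinarith [specNorm_nonneg Q]

lemma specNorm_mulVec {m n : ℕ} (A : Matrix (Fin m) (Fin n) ℝ) (v : Fin n → ℝ) :
    Real.sqrt (∑ i, ((A *ᵥ v) i) ^ 2) ≤ specNorm A * Real.sqrt (∑ j, (v j) ^ 2) := by
  have h := Matrix.l2_opNorm_mulVec A ((WithLp.equiv 2 (Fin n → ℝ)).symm v)
  have hv : ∀ (k : ℕ) (w : Fin k → ℝ),
      ‖(WithLp.equiv 2 (Fin k → ℝ)).symm w‖ = Real.sqrt (∑ j, (w j) ^ 2) := by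
    intro k w
    rw [EuclideanSpace.norm_eq]
    congr 1; apply Finset.sum_congr rfl; intro j _
    simp [Real.norm_eq_abs, sq_abs]
  rw [specNorm_eq]
  calc Real.sqrt (∑ i, ((A *ᵥ v) i) ^ 2)
      = ‖(EuclideanSpace.equiv (Fin m) ℝ).symm (A *ᵥ v)‖ := by
        rw [show ((EuclideanSpace.equiv (Fin m) ℝ).symm (A *ᵥ v) : EuclideanSpace ℝ (Fin m))
            = (WithLp.equiv 2 (Fin m → ℝ)).symm (A *ᵥ v) from rfl, hv]
    _ ≤ ‖A‖ * ‖(WithLp.equiv 2 (Fin n → ℝ)).symm v‖ := by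
        simpa using h
    _ = ‖A‖ * Real.sqrt (∑ j, (v j) ^ 2) := by rw [hv]
end Spec


section Frob
attribute [local instance] Matrix.frobeniusSeminormedAddCommGroup

lemma frobNorm_eq {m n : ℕ} (A : Matrix (Fin m) (Fin n) ℝ) : frobNorm A = ‖A‖ := by
  rw [Matrix.frobenius_norm_def, frobNorm]
  rw [Real.sqrt_eq_rpow]
  congr 1
  apply Finset.sum_congr rfl; intro i _
  apply Finset.sum_congr rfl; intro j _
  rw [show ((2:ℝ)) = ((2:ℕ):ℝ) by norm_num, Real.rpow_natCast]
  rw [Real.norm_eq_abs, sq_abs]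

lemma frobNorm_nonneg {m n : ℕ} (A : Matrix (Fin m) (Fin n) ℝ) : 0 ≤ frobNorm A :=
  Real.sqrt_nonneg _

lemma frobNorm_add_le {m n : ℕ} (A B : Matrix (Fin m) (Fin n) ℝ) :
    frobNorm (A + B) ≤ frobNorm A + frobNorm B := by
  simp only [frobNorm_eq]; exact norm_add_le A B

lemma frobNorm_sum_le {m n : ℕ} (k : ℕ) (f : ℕ → Matrix (Fin m) (Fin n) ℝ) :
    frobNorm (∑ s ∈ Finset.range k, f s) ≤ ∑ s ∈ Finset.range k, frobNorm (f s) := by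
  simp only [frobNorm_eq]; exact norm_sum_le _ _
end Frob


lemma spec_of_log {a b : ℝ} (ha : 0 ≤ a) (h : Real.log a < b) : a ≤ Real.exp b := by
  rcases eq_or_lt_of_le ha with h0 | h0
  · exact le_of_lt (h0 ▸ Real.exp_pos b)
  · rw [← Real.exp_log h0]
    exact (Real.exp_le_exp.mpr h.le)

lemma int_low {α : ℝ} (hα0 : 0 < α) (hα1 : α < 1) (u t : ℕ) (hu : 1 ≤ u) (hut : u ≤ t + 1) :
    ((t + 1 - u : ℕ) : ℝ) * ((t:ℝ) + 1) ^ (-α) ≤ ∫ r in (u:ℝ)..((t:ℝ) + 1), r ^ (-α) := by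
  have huT : (u:ℝ) ≤ (t:ℝ) + 1 := by
    have : (u:ℝ) ≤ ((t:ℕ):ℝ) + 1 := by exact_mod_cast hut
    linarith
  have h1 : ∫ _r in (u:ℝ)..((t:ℝ) + 1), ((t:ℝ) + 1) ^ (-α)
      = (((t:ℝ) + 1) - u) * ((t:ℝ) + 1) ^ (-α) := by
    rw [intervalIntegral.integral_const, smul_eq_mul]
  have h2 : (∫ _r in (u:ℝ)..((t:ℝ) + 1), ((t:ℝ) + 1) ^ (-α))
      ≤ ∫ r in (u:ℝ)..((t:ℝ) + 1), r ^ (-α) := by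
    apply intervalIntegral.integral_mono_on huT intervalIntegrable_const
      (intervalIntegral.intervalIntegrable_rpow' (by linarith))
    intro r hr
    have hr1 : (1:ℝ) ≤ r := le_trans (by exact_mod_cast hu) hr.1
    exact Real.rpow_le_rpow_of_nonpos (by linarith) hr.2 (by linarith)
  have h3 : ((t + 1 - u : ℕ) : ℝ) = ((t:ℝ) + 1) - u := by
    have := Nat.cast_sub hut (R := ℝ)
    push_cast at this ⊢
    linarith
  rw [h3]
  linarith [h1 ▸ h2]

lemma int_low0 {α : ℝ} (hα0 : 0 < α) (hα1 : α < 1) (t : ℕ) :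
    (t:ℝ) * ((t:ℝ) + 1) ^ (-α) ≤ ∫ r in (0:ℝ)..((t:ℝ) + 1), r ^ (-α) := by
  have hInt : ∀ a b : ℝ, IntervalIntegrable (fun r : ℝ => r ^ (-α)) MeasureTheory.volume a b :=
    fun a b => intervalIntegral.intervalIntegrable_rpow' (by linarith)
  have hsplit : (∫ r in (0:ℝ)..(1:ℝ), r ^ (-α)) + (∫ r in (1:ℝ)..((t:ℝ) + 1), r ^ (-α))
      = ∫ r in (0:ℝ)..((t:ℝ) + 1), r ^ (-α) :=
    intervalIntegral.integral_add_adjacent_intervals (hInt 0 1) (hInt 1 _)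
  have h01 : 0 ≤ ∫ r in (0:ℝ)..(1:ℝ), r ^ (-α) := by
    apply intervalIntegral.integral_nonneg (by norm_num)
    intro r hr
    exact Real.rpow_nonneg hr.1 _
  have h1T := int_low hα0 hα1 1 t (le_refl 1) (by omega)
  have h3 : ((t + 1 - 1 : ℕ) : ℝ) = (t:ℝ) := by norm_num
  rw [h3] at h1T
  have : ((1:ℕ):ℝ) = (1:ℝ) := by norm_num
  rw [this] at h1T
  linarith


lemma superpoly (ε γ m : ℝ) (hε : 0 < ε) (hγ : 0 < γ) :
    ∃ K, 0 < K ∧ ∀ y : ℝ, 1 ≤ y → Real.exp (-(ε * y ^ γ)) ≤ K * y ^ (-m) := by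
  obtain ⟨N, hN⟩ : ∃ N : ℕ, m / γ ≤ N ∧ 0 < N := by
    refine ⟨⌈m / γ⌉₊ + 1, ⟨?_, by omega⟩⟩
    calc m / γ ≤ ⌈m / γ⌉₊ := Nat.le_ceil _
      _ ≤ (⌈m / γ⌉₊ + 1 : ℕ) := by push_cast; linarith
  have hNR : (0:ℝ) < N := by exact_mod_cast hN.2
  refine ⟨(N / ε) ^ N, pow_pos (div_pos hNR hε) N, fun y hy => ?_⟩
  have hy0 : (0:ℝ) < y := by linarith
  set z := ε * y ^ γ with hz
  have hz0 : 0 < z := by positivity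
  -- exp z ≥ (z/N)^N
  have h1 : (z / N) ^ N ≤ Real.exp z := by
    have h2 : z / N ≤ Real.exp (z / N) := by
      have := Real.add_one_le_exp (z / N)
      linarith
    calc (z / N) ^ N ≤ Real.exp (z / N) ^ N :=
          pow_le_pow_left₀ (by positivity) h2 N
      _ = Real.exp (N * (z / N)) := (Real.exp_nat_mul _ N).symm
      _ = Real.exp z := by rw [mul_div_cancel₀]; exact ne_of_gt hNR
  -- (z/N)^N = (ε/N)^N * y^(γ*N)
  have h3 : (z / N) ^ N = (ε / N) ^ N * y ^ (γ * N) := by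
    have e1 : z / N = (ε / N) * y ^ γ := by rw [hz]; ring
    rw [e1, mul_pow, ← Real.rpow_natCast (y ^ γ) N, ← Real.rpow_mul (le_of_lt hy0)]
  have h4 : y ^ m ≤ y ^ (γ * N) := by
    apply Real.rpow_le_rpow_of_exponent_le hy
    rw [div_le_iff₀ hγ] at hN
    calc m ≤ N * γ := hN.1
      _ = γ * N := mul_comm _ _
  have h5 : (ε / N) ^ N * y ^ m ≤ Real.exp z := by
    calc (ε / N) ^ N * y ^ m ≤ (ε / N) ^ N * y ^ (γ * N) := by
          apply mul_le_mul_of_nonneg_left h4 (by positivity)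
      _ = (z / N) ^ N := h3.symm
      _ ≤ Real.exp z := h1
  have h6 : Real.exp (-z) ≤ ((ε / N) ^ N * y ^ m)⁻¹ := by
    rw [Real.exp_neg]
    apply inv_anti₀ (by positivity) h5
  calc Real.exp (-z) ≤ ((ε / N) ^ N * y ^ m)⁻¹ := h6
    _ = (N / ε) ^ N * y ^ (-m) := by
        rw [mul_inv, Real.rpow_neg (le_of_lt hy0), ← inv_pow, inv_div]


lemma kernel_sum (C α β : ℝ) (hC : 0 < C) (hα0 : 0 < α) (hα1 : α < 1) (hβ0 : 0 < β) :
    ∃ K, 0 < K ∧ ∀ t : ℕ, 2 ≤ t →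
      ∑ s ∈ Finset.range (t + 1),
        (max 1 (s:ℝ)) ^ (-β) * Real.exp (-(C * ((t:ℝ) + 1) ^ (-α))) ^ (t - s)
        ≤ K * (t:ℝ) ^ (α - β) := by
  obtain ⟨K₀, hK₀, hsp⟩ := superpoly (C / 8) (1 - α) (β + 1) (by linarith) (by linarith)
  refine ⟨2 * K₀ + 2 ^ β * Real.exp C * C⁻¹ * 2, by positivity, fun t ht => ?_⟩
  have htR : (2:ℝ) ≤ (t:ℝ) := by exact_mod_cast ht
  have ht0 : (0:ℝ) < t := by linarith
  have ht1 : (1:ℝ) ≤ t := by linarith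
  set T : ℝ := (t:ℝ) + 1 with hT
  have hT1 : (1:ℝ) ≤ T := by rw [hT]; linarith
  have hT0 : (0:ℝ) < T := by linarith
  set x : ℝ := C * T ^ (-α) with hx
  have hx0 : 0 < x := by positivity
  set q : ℝ := Real.exp (-x) with hq
  have hq0 : 0 < q := Real.exp_pos _
  have hq1 : q < 1 := by
    rw [hq, Real.exp_lt_one_iff]; linarith
  -- split the sum
  have hsplit : ∑ s ∈ Finset.range (t + 1), (max 1 (s:ℝ)) ^ (-β) * q ^ (t - s)
      = (∑ s ∈ Finset.Ico 0 (t / 2 + 1), (max 1 (s:ℝ)) ^ (-β) * q ^ (t - s))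
      + ∑ s ∈ Finset.Ico (t / 2 + 1) (t + 1), (max 1 (s:ℝ)) ^ (-β) * q ^ (t - s) := by
    rw [Finset.range_eq_Ico,
      ← Finset.sum_Ico_consecutive _ (Nat.zero_le _) (by omega : t / 2 + 1 ≤ t + 1)]
  rw [hsplit]
  -- head bound
  have hhead : (∑ s ∈ Finset.Ico 0 (t / 2 + 1), (max 1 (s:ℝ)) ^ (-β) * q ^ (t - s))
      ≤ 2 * K₀ * (t:ℝ) ^ (α - β) := by
    have hterm : ∀ s ∈ Finset.Ico 0 (t / 2 + 1),
        (max 1 (s:ℝ)) ^ (-β) * q ^ (t - s) ≤ q ^ (t / 2) := by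
      intro s hs
      simp only [Finset.mem_Ico] at hs
      have h1 : (max 1 (s:ℝ)) ^ (-β) ≤ 1 :=
        Real.rpow_le_one_of_one_le_of_nonpos (le_max_left _ _) (by linarith)
      have h2 : q ^ (t - s) ≤ q ^ (t / 2) := by
        apply pow_le_pow_of_le_one hq0.le hq1.le
        omega
      calc (max 1 (s:ℝ)) ^ (-β) * q ^ (t - s) ≤ 1 * q ^ (t / 2) := by
            apply mul_le_mul h1 h2 (by positivity) zero_le_one
        _ = q ^ (t / 2) := one_mul _
    calc (∑ s ∈ Finset.Ico 0 (t / 2 + 1), (max 1 (s:ℝ)) ^ (-β) * q ^ (t - s))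
        ≤ ∑ _s ∈ Finset.Ico 0 (t / 2 + 1), q ^ (t / 2) := Finset.sum_le_sum hterm
      _ = (t / 2 + 1 : ℕ) * q ^ (t / 2) := by
          rw [Finset.sum_const, Nat.card_Ico, nsmul_eq_mul]; norm_num
      _ ≤ 2 * (t:ℝ) * q ^ (t / 2) := by
          apply mul_le_mul_of_nonneg_right _ (by positivity)
          have : (t / 2 + 1 : ℕ) ≤ 2 * t := by omega
          calc ((t / 2 + 1 : ℕ) : ℝ) ≤ ((2 * t : ℕ) : ℝ) := by exact_mod_cast this
            _ = 2 * (t:ℝ) := by push_cast; ring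
      _ ≤ 2 * (t:ℝ) * (K₀ * (t:ℝ) ^ (-(β + 1))) := by
          apply mul_le_mul_of_nonneg_left _ (by positivity)
          -- q ^ (t/2) = exp(-(x * (t/2))) ≤ exp(-(C/8 * t^(1-α))) ≤ K₀ t^{-(β+1)}
          have e1 : q ^ (t / 2) = Real.exp (-((t / 2 : ℕ) * x)) := by
            rw [hq, ← Real.exp_nat_mul]; ring_nf
          have e2 : (C / 8) * (t:ℝ) ^ (1 - α) ≤ ((t / 2 : ℕ) : ℝ) * x := by
            have hhalf : (t:ℝ) / 4 ≤ ((t / 2 : ℕ) : ℝ) := by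
              have h4 : t ≤ 2 * (t / 2) + 1 := by omega
              have h4R : (t:ℝ) ≤ 2 * ((t / 2 : ℕ) : ℝ) + 1 := by exact_mod_cast h4
              linarith
            have hTa : (1:ℝ)/2 * (t:ℝ) ^ (-α) ≤ T ^ (-α) := by
              have h5 : T ≤ 2 * t := by rw [hT]; linarith
              have h6 : T ^ (-α) ≥ (2 * t) ^ (-α) :=
                Real.rpow_le_rpow_of_nonpos hT0 h5 (by linarith)
              have h7 : ((2:ℝ) * t) ^ (-α) = 2 ^ (-α) * (t:ℝ) ^ (-α) :=
                Real.mul_rpow (by norm_num) ht0.le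
              have h8 : (1:ℝ)/2 ≤ 2 ^ (-α) := by
                have := Real.rpow_le_rpow_of_exponent_le (by norm_num : (1:ℝ) ≤ 2)
                  (by linarith : (-1:ℝ) ≤ -α)
                rw [Real.rpow_neg_one] at this
                linarith
              have h9 : (1:ℝ)/2 * (t:ℝ) ^ (-α) ≤ 2 ^ (-α) * (t:ℝ) ^ (-α) := by
                apply mul_le_mul_of_nonneg_right h8 (by positivity)
              linarith [h9, h7 ▸ h6]
            have e3 : (t:ℝ) ^ (1 - α) = (t:ℝ) * (t:ℝ) ^ (-α) := by
              rw [show (1:ℝ) - α = 1 + (-α) by ring, Real.rpow_add ht0, Real.rpow_one]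
            rw [e3, hx]
            have h10 : 0 ≤ (t:ℝ) ^ (-α) := by positivity
            calc C / 8 * ((t:ℝ) * (t:ℝ) ^ (-α)) = ((t:ℝ)/4) * (C * (1/2 * (t:ℝ) ^ (-α))) := by ring
              _ ≤ ((t / 2 : ℕ) : ℝ) * (C * T ^ (-α)) := by
                  apply mul_le_mul hhalf _ (by positivity) (by positivity)
                  exact mul_le_mul_of_nonneg_left hTa hC.le
          calc q ^ (t / 2) = Real.exp (-((t / 2 : ℕ) * x)) := e1
            _ ≤ Real.exp (-((C / 8) * (t:ℝ) ^ (1 - α))) := by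
                apply Real.exp_le_exp.mpr; linarith
            _ ≤ K₀ * (t:ℝ) ^ (-(β + 1)) := hsp (t:ℝ) ht1
      _ = 2 * K₀ * ((t:ℝ) * (t:ℝ) ^ (-(β + 1))) := by ring
      _ ≤ 2 * K₀ * (t:ℝ) ^ (α - β) := by
          apply mul_le_mul_of_nonneg_left _ (by positivity)
          have e4 : (t:ℝ) * (t:ℝ) ^ (-(β + 1)) = (t:ℝ) ^ (-β) := by
            rw [show -β = 1 + (-(β+1)) by ring, Real.rpow_add ht0, Real.rpow_one]
          rw [e4]
          exact Real.rpow_le_rpow_of_exponent_le ht1 (by linarith)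
  -- tail bound
  have htail : (∑ s ∈ Finset.Ico (t / 2 + 1) (t + 1), (max 1 (s:ℝ)) ^ (-β) * q ^ (t - s))
      ≤ 2 ^ β * Real.exp C * C⁻¹ * 2 * (t:ℝ) ^ (α - β) := by
    have hcoef : ∀ s ∈ Finset.Ico (t / 2 + 1) (t + 1),
        (max 1 (s:ℝ)) ^ (-β) ≤ 2 ^ β * (t:ℝ) ^ (-β) := by
      intro s hs
      simp only [Finset.mem_Ico] at hs
      have hs1 : 1 ≤ s := by omega
      have hsR : (t:ℝ) / 2 ≤ (s:ℝ) := by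
        have : t ≤ 2 * s := by omega
        have : (t:ℝ) ≤ 2 * (s:ℝ) := by exact_mod_cast this
        linarith
      have hmax : max 1 (s:ℝ) = (s:ℝ) := max_eq_right (by exact_mod_cast hs1)
      rw [hmax]
      have h1 : (s:ℝ) ^ (-β) ≤ ((t:ℝ)/2) ^ (-β) :=
        Real.rpow_le_rpow_of_nonpos (by linarith) hsR (by linarith)
      have h2 : ((t:ℝ)/2) ^ (-β) = 2 ^ β * (t:ℝ) ^ (-β) := by
        rw [Real.div_rpow ht0.le (by norm_num : (0:ℝ) ≤ 2), Real.rpow_neg (by norm_num : (0:ℝ) ≤ 2)]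
        field_simp
      linarith [h2 ▸ h1]
    have hgeom : (∑ s ∈ Finset.Ico (t / 2 + 1) (t + 1), q ^ (t - s)) ≤ Real.exp C * C⁻¹ * 2 * (t:ℝ) ^ α := by
      have hsub : (∑ s ∈ Finset.Ico (t / 2 + 1) (t + 1), q ^ (t - s))
          ≤ ∑ s ∈ Finset.range (t + 1), q ^ (t - s) := by
        apply Finset.sum_le_sum_of_subset_of_nonneg
        · rw [Finset.range_eq_Ico]; exact Finset.Ico_subset_Ico (Nat.zero_le _) le_rfl
        · intro s _ _; positivity
      have hrefl : (∑ s ∈ Finset.range (t + 1), q ^ (t - s)) = ∑ k ∈ Finset.range (t + 1), q ^ k := by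
        have := Finset.sum_range_reflect (fun k => q ^ k) (t + 1)
        simpa using this
      have hgs : (∑ k ∈ Finset.range (t + 1), q ^ k) ≤ 1 / (1 - q) := by
        rw [geom_sum_eq (ne_of_lt hq1)]
        rw [show (q ^ (t+1) - 1) / (q - 1) = (1 - q ^ (t+1)) / (1 - q) by
          rw [← neg_div_neg_eq]; ring_nf]
        have h0 : (0:ℝ) ≤ q ^ (t + 1) := by positivity
        gcongr
        · linarith
      have hxq : x * q + q ≤ 1 := by
        rw [hq, Real.exp_neg]
        have h := Real.add_one_le_exp x
        have hE := Real.exp_pos x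
        have h2 := mul_le_mul_of_nonneg_right h (inv_nonneg.mpr hE.le)
        rw [mul_inv_cancel₀ (ne_of_gt hE)] at h2
        nlinarith
      have hxq0 : 0 < x * q := by positivity
      have hfrac : 1 / (1 - q) ≤ 1 / (x * q) :=
        one_div_le_one_div_of_le hxq0 (by linarith)
      have hinv : 1 / (x * q) = Real.exp x / x := by
        rw [hq, Real.exp_neg]
        field_simp
      have hexpx : Real.exp x ≤ Real.exp C := by
        apply Real.exp_le_exp.mpr
        rw [hx]
        have := Real.rpow_le_one_of_one_le_of_nonpos hT1 (by linarith : -α ≤ 0)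
        nlinarith
      have hxinv : x⁻¹ = C⁻¹ * T ^ α := by
        rw [hx, mul_inv, Real.rpow_neg hT0.le, inv_inv]
      have hTα : T ^ α ≤ 2 * (t:ℝ) ^ α := by
        have h5 : T ≤ 2 * t := by rw [hT]; linarith
        calc T ^ α ≤ ((2:ℝ) * t) ^ α := Real.rpow_le_rpow hT0.le h5 hα0.le
          _ = 2 ^ α * (t:ℝ) ^ α := Real.mul_rpow (by norm_num) ht0.le
          _ ≤ 2 * (t:ℝ) ^ α := by
              have h6 : (2:ℝ) ^ α ≤ 2 ^ (1:ℝ) :=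
                Real.rpow_le_rpow_of_exponent_le one_le_two hα1.le
              rw [Real.rpow_one] at h6
              apply mul_le_mul_of_nonneg_right h6 (by positivity)
      have hfinal : Real.exp x / x ≤ Real.exp C * C⁻¹ * 2 * (t:ℝ) ^ α := by
        rw [div_eq_mul_inv, hxinv]
        calc Real.exp x * (C⁻¹ * T ^ α) ≤ Real.exp C * (C⁻¹ * (2 * (t:ℝ) ^ α)) := by
              apply mul_le_mul hexpx _ (by positivity) (Real.exp_pos C).le
              apply mul_le_mul_of_nonneg_left hTα (by positivity)
          _ = Real.exp C * C⁻¹ * 2 * (t:ℝ) ^ α := by ring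
      calc (∑ s ∈ Finset.Ico (t / 2 + 1) (t + 1), q ^ (t - s))
          ≤ ∑ s ∈ Finset.range (t + 1), q ^ (t - s) := hsub
        _ = ∑ k ∈ Finset.range (t + 1), q ^ k := hrefl
        _ ≤ 1 / (1 - q) := hgs
        _ ≤ 1 / (x * q) := hfrac
        _ = Real.exp x / x := hinv
        _ ≤ Real.exp C * C⁻¹ * 2 * (t:ℝ) ^ α := hfinal
    calc (∑ s ∈ Finset.Ico (t / 2 + 1) (t + 1), (max 1 (s:ℝ)) ^ (-β) * q ^ (t - s))
        ≤ ∑ s ∈ Finset.Ico (t / 2 + 1) (t + 1), 2 ^ β * (t:ℝ) ^ (-β) * q ^ (t - s) := by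
          apply Finset.sum_le_sum
          intro s hs
          exact mul_le_mul_of_nonneg_right (hcoef s hs) (by positivity)
      _ = 2 ^ β * (t:ℝ) ^ (-β) * ∑ s ∈ Finset.Ico (t / 2 + 1) (t + 1), q ^ (t - s) := by
          rw [Finset.mul_sum]
      _ ≤ 2 ^ β * (t:ℝ) ^ (-β) * (Real.exp C * C⁻¹ * 2 * (t:ℝ) ^ α) := by
          apply mul_le_mul_of_nonneg_left hgeom (by positivity)
      _ = 2 ^ β * Real.exp C * C⁻¹ * 2 * ((t:ℝ) ^ (-β) * (t:ℝ) ^ α) := by ring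
      _ = 2 ^ β * Real.exp C * C⁻¹ * 2 * (t:ℝ) ^ (α - β) := by
          rw [← Real.rpow_add ht0, show -β + α = α - β by ring]
  linarith


lemma frobNorm_mul_le {p n : ℕ} (A : Matrix (Fin p) (Fin n) ℝ) (B : Matrix (Fin n) (Fin n) ℝ) :
    frobNorm (A * B) ≤ frobNorm A * specNorm B := by
  have key : ∀ i j, (A * B) i j = (Bᵀ *ᵥ (A i)) j := by
    intro i j
    simp [Matrix.mul_apply, Matrix.mulVec, dotProduct, transpose_apply, mul_comm]
  have hrow : ∀ i, Real.sqrt (∑ j, ((A * B) i j) ^ 2) ≤ specNorm B * Real.sqrt (∑ j, (A i j) ^ 2) := by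
    intro i
    calc Real.sqrt (∑ j, ((A * B) i j) ^ 2) = Real.sqrt (∑ j, ((Bᵀ *ᵥ (A i)) j) ^ 2) := by
          congr 1; exact Finset.sum_congr rfl fun j _ => by rw [key]
      _ ≤ specNorm Bᵀ * Real.sqrt (∑ j, (A i j) ^ 2) := specNorm_mulVec _ _
      _ = specNorm B * Real.sqrt (∑ j, (A i j) ^ 2) := by rw [specNorm_transpose]
  rw [frobNorm, frobNorm]
  have h1 : ∑ i, ∑ j, ((A * B) i j) ^ 2 ≤ (specNorm B) ^ 2 * ∑ i, ∑ j, (A i j) ^ 2 := by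
    rw [Finset.mul_sum]
    apply Finset.sum_le_sum
    intro i _
    have h := hrow i
    have h2 := Real.sqrt_nonneg (∑ j, ((A * B) i j) ^ 2)
    have h3 : (Real.sqrt (∑ j, ((A * B) i j) ^ 2)) ^ 2 ≤ (specNorm B * Real.sqrt (∑ j, (A i j) ^ 2)) ^ 2 := by
      apply pow_le_pow_left₀ h2 h
    rw [Real.sq_sqrt (Finset.sum_nonneg fun j _ => sq_nonneg _)] at h3
    rw [mul_pow, Real.sq_sqrt (Finset.sum_nonneg fun j _ => sq_nonneg _)] at h3
    exact h3
  calc Real.sqrt (∑ i, ∑ j, ((A * B) i j) ^ 2)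
      ≤ Real.sqrt ((specNorm B) ^ 2 * ∑ i, ∑ j, (A i j) ^ 2) := Real.sqrt_le_sqrt h1
    _ = specNorm B * Real.sqrt (∑ i, ∑ j, (A i j) ^ 2) := by
        rw [Real.sqrt_mul (sq_nonneg _), Real.sqrt_sq (specNorm_nonneg B)]
    _ = Real.sqrt (∑ i, ∑ j, (A i j) ^ 2) * specNorm B := mul_comm _ _

lemma ordProd_empty {n : ℕ} (M : ℕ → Matrix (Fin n) (Fin n) ℝ) (t : ℕ) :
    ordProd M (t + 1) t = 1 := by
  simp [ordProd]

lemma ordProd_succ {n : ℕ} (M : ℕ → Matrix (Fin n) (Fin n) ℝ) {s t : ℕ} (h : s ≤ t + 1) :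
    ordProd M s (t + 1) = ordProd M s t * M (t + 1) := by
  unfold ordProd
  have h1 : t + 1 + 1 - s = (t + 1 - s) + 1 := by omega
  rw [h1, List.range_succ, List.map_append, List.prod_append]
  have h2 : s + (t + 1 - s) = t + 1 := by omega
  simp [h2]

lemma unroll {p n : ℕ} (M : ℕ → Matrix (Fin n) (Fin n) ℝ)
    (B X : ℕ → Matrix (Fin p) (Fin n) ℝ)
    (hrec : ∀ t, X (t + 1) = X t * M t + B t) (t : ℕ) :
    X (t + 1) = X 0 * ordProd M 0 t + ∑ s ∈ Finset.range (t + 1), B s * ordProd M (s + 1) t := by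
  induction t with
  | zero =>
    rw [hrec 0]
    simp [ordProd_empty]
    congr 1
    · congr 1; unfold ordProd; simp [List.range_succ]
  | succ t ih =>
    rw [hrec (t + 1), ih, Matrix.add_mul, Matrix.sum_mul,
      Finset.sum_range_succ (fun s => B s * ordProd M (s + 1) (t + 1)), ordProd_empty, Matrix.mul_one,
      Matrix.mul_assoc (X 0), ← ordProd_succ M (Nat.zero_le _), add_assoc]
    congr 2
    apply Finset.sum_congr rfl
    intro s hs
    simp only [Finset.mem_range] at hs
    rw [Matrix.mul_assoc, ← ordProd_succ M (by omega : s + 1 ≤ t + 1)]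


/-- Quantitative one-sided decay: under the recursion
`X_{t+1} = X_t (Id − E[A_t]) + B_t`, if
`log ‖(∏_{r=s}^t (Id − E[A_r])) Q‖₂ < X̄ − C ∫_s^{t+1} r^{−α} dr` and
`‖B_t‖_F = O(t^{−β})` with `0 < α < 1 < β`, then `‖X_t Q‖_F = O(t^{α−β})`. -/
theorem stmt_10 {Ω : Type*} [MeasureSpace Ω] [IsProbabilityMeasure (volume : Measure Ω)]
    {n p : ℕ} (A : ℕ → Ω → Matrix (Fin n) (Fin n) ℝ)
    (hpsd : ∀ t, ∀ᵐ ω, (A t ω).PosSemidef)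
    (hbdd : ∀ t, ∀ᵐ ω, specNorm (A t ω) ≤ 2)
    (hint : ∀ t i j, Integrable (fun ω => A t ω i j))
    (B : ℕ → Matrix (Fin p) (Fin n) ℝ)
    (Q : Matrix (Fin n) (Fin n) ℝ) (hQsymm : Qᵀ = Q) (hQproj : Q * Q = Q)
    (X : ℕ → Matrix (Fin p) (Fin n) ℝ)
    (hrec : ∀ t, X (t + 1) = X t * (1 - mExp (A t)) + B t)
    (Xbar C α β : ℝ) (hXbar : 0 ≤ Xbar) (hC : 0 < C)
    (hα0 : 0 < α) (hα1 : α < 1) (hβ : 1 < β)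
    (hlog : ∀ s t : ℕ, s ≤ t →
      Real.log (specNorm (ordProd (fun r => 1 - mExp (A r)) s t * Q)) <
        Xbar - C * ∫ r in (s : ℝ)..((t : ℝ) + 1), r ^ (-α))
    (hBrate : (fun t : ℕ => frobNorm (B t)) =O[atTop] (fun t : ℕ => (t : ℝ) ^ (-β))) :
    (fun t : ℕ => frobNorm (X t * Q)) =O[atTop] (fun t : ℕ => (t : ℝ) ^ (α - β)) := by
  set M : ℕ → Matrix (Fin n) (Fin n) ℝ := fun r => 1 - mExp (A r) with hMdef
  set qt : ℕ → ℝ := fun t => Real.exp (-(C * ((t:ℝ) + 1) ^ (-α))) with hqt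
  -- bound on B
  rw [Asymptotics.isBigO_iff] at hBrate
  obtain ⟨c0, hc0⟩ := hBrate
  rw [Filter.eventually_atTop] at hc0
  obtain ⟨N0, hN0⟩ := hc0
  set N : ℕ := max N0 1 with hNdef
  set Cb : ℝ := |c0| + ∑ s ∈ Finset.range N, frobNorm (B s) * (max 1 (s:ℝ)) ^ β with hCbdef
  have hsum_nonneg : 0 ≤ ∑ s ∈ Finset.range N, frobNorm (B s) * (max 1 (s:ℝ)) ^ β :=
    Finset.sum_nonneg fun s _ => mul_nonneg (frobNorm_nonneg _)
      (Real.rpow_nonneg (le_trans zero_le_one (le_max_left _ _)) _)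
  have hCb0 : 0 ≤ Cb := add_nonneg (abs_nonneg _) hsum_nonneg
  have hB : ∀ s : ℕ, frobNorm (B s) ≤ Cb * (max 1 (s:ℝ)) ^ (-β) := by
    intro s
    have hmax1 : (1:ℝ) ≤ max 1 (s:ℝ) := le_max_left _ _
    have hmax0 : (0:ℝ) < max 1 (s:ℝ) := by linarith
    by_cases hs : N ≤ s
    · have hs1 : 1 ≤ s := le_trans (le_max_right N0 1) hs
      have hmax : max 1 (s:ℝ) = (s:ℝ) := max_eq_right (by exact_mod_cast hs1)
      have h := hN0 s (le_trans (le_max_left N0 1) hs)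
      rw [Real.norm_eq_abs, Real.norm_eq_abs, abs_of_nonneg (frobNorm_nonneg _),
        abs_of_nonneg (Real.rpow_nonneg (Nat.cast_nonneg s) _)] at h
      rw [hmax]
      calc frobNorm (B s) ≤ c0 * (s:ℝ) ^ (-β) := h
        _ ≤ Cb * (s:ℝ) ^ (-β) := by
            apply mul_le_mul_of_nonneg_right _ (Real.rpow_nonneg (Nat.cast_nonneg s) _)
            calc c0 ≤ |c0| := le_abs_self c0
              _ ≤ Cb := le_add_of_nonneg_right hsum_nonneg
    · push_neg at hs
      have hterm : frobNorm (B s) * (max 1 (s:ℝ)) ^ β ≤ Cb := by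
        calc frobNorm (B s) * (max 1 (s:ℝ)) ^ β
            ≤ ∑ u ∈ Finset.range N, frobNorm (B u) * (max 1 (u:ℝ)) ^ β :=
              Finset.single_le_sum (f := fun u => frobNorm (B u) * (max 1 (u:ℝ)) ^ β)
                (fun u _ => mul_nonneg (frobNorm_nonneg _)
                  (Real.rpow_nonneg (le_trans zero_le_one (le_max_left _ _)) _))
                (Finset.mem_range.mpr hs)
          _ ≤ Cb := le_add_of_nonneg_left (abs_nonneg _)
      have hid : (max 1 (s:ℝ)) ^ β * (max 1 (s:ℝ)) ^ (-β) = 1 := by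
        rw [← Real.rpow_add hmax0]; simp
      calc frobNorm (B s) = frobNorm (B s) * ((max 1 (s:ℝ)) ^ β * (max 1 (s:ℝ)) ^ (-β)) := by
            rw [hid, mul_one]
        _ = (frobNorm (B s) * (max 1 (s:ℝ)) ^ β) * (max 1 (s:ℝ)) ^ (-β) := by ring
        _ ≤ Cb * (max 1 (s:ℝ)) ^ (-β) :=
            mul_le_mul_of_nonneg_right hterm (Real.rpow_nonneg hmax0.le _)
  -- spectral bounds
  have hspecQ : specNorm Q ≤ 1 := specNorm_proj_le_one Q hQsymm hQproj
  have hspec_main : ∀ t s : ℕ, s ≤ t →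
      specNorm (ordProd M (s + 1) t * Q) ≤ Real.exp Xbar * (qt t) ^ (t - s) := by
    intro t s hst
    rcases eq_or_lt_of_le hst with heq | hlt
    · subst heq
      rw [ordProd_empty, Matrix.one_mul, Nat.sub_self, pow_zero, mul_one]
      exact le_trans hspecQ (Real.one_le_exp hXbar)
    · have hl := hlog (s + 1) t hlt
      have h1 := spec_of_log (specNorm_nonneg _) hl
      have h2 := int_low hα0 hα1 (s + 1) t (by omega) (by omega)
      have h3 : (t + 1 - (s + 1) : ℕ) = t - s := by omega
      rw [h3] at h2
      calc specNorm (ordProd M (s + 1) t * Q)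
          ≤ Real.exp (Xbar - C * ∫ r in ((s+1 : ℕ) : ℝ)..((t:ℝ) + 1), r ^ (-α)) := h1
        _ ≤ Real.exp (Xbar - C * (((t - s : ℕ) : ℝ) * ((t:ℝ) + 1) ^ (-α))) := by
            apply Real.exp_le_exp.mpr
            have := mul_le_mul_of_nonneg_left h2 hC.le
            linarith
        _ = Real.exp Xbar * (qt t) ^ (t - s) := by
            rw [sub_eq_add_neg, Real.exp_add]
            congr 1
            rw [hqt, ← Real.exp_nat_mul]
            congr 1
            ring
  have hspec0 : ∀ t : ℕ, specNorm (ordProd M 0 t * Q) ≤ Real.exp Xbar * (qt t) ^ t := by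
    intro t
    have hl := hlog 0 t (Nat.zero_le t)
    have h1 := spec_of_log (specNorm_nonneg _) hl
    have h2 := int_low0 hα0 hα1 t
    calc specNorm (ordProd M 0 t * Q)
        ≤ Real.exp (Xbar - C * ∫ r in ((0 : ℕ) : ℝ)..((t:ℝ) + 1), r ^ (-α)) := h1
      _ ≤ Real.exp (Xbar - C * ((t:ℝ) * ((t:ℝ) + 1) ^ (-α))) := by
          apply Real.exp_le_exp.mpr
          have h2' : C * ((t:ℝ) * ((t:ℝ) + 1) ^ (-α))
              ≤ C * ∫ r in ((0 : ℕ) : ℝ)..((t:ℝ) + 1), r ^ (-α) := by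
            push_cast
            exact mul_le_mul_of_nonneg_left h2 hC.le
          linarith
      _ = Real.exp Xbar * (qt t) ^ t := by
          rw [sub_eq_add_neg, Real.exp_add]
          congr 1
          rw [hqt, ← Real.exp_nat_mul]
          congr 1
          ring
  -- unrolled recursion
  have hX : ∀ t : ℕ, X (t + 1) * Q = X 0 * (ordProd M 0 t * Q)
      + ∑ s ∈ Finset.range (t + 1), B s * (ordProd M (s + 1) t * Q) := by
    intro t
    rw [unroll M B X hrec t, Matrix.add_mul, Matrix.sum_mul]
    congr 1
    · rw [Matrix.mul_assoc]
    · exact Finset.sum_congr rfl fun s _ => Matrix.mul_assoc _ _ _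
  -- kernel sum bound
  obtain ⟨K₁, hK₁, hker⟩ := kernel_sum C α β hC hα0 hα1 (by linarith)
  -- main bound
  have hfb : ∀ t : ℕ, 2 ≤ t → frobNorm (X (t + 1) * Q)
      ≤ Real.exp Xbar * (frobNorm (X 0) + Cb) * (K₁ * (t:ℝ) ^ (α - β)) := by
    intro t ht
    set S : ℝ := ∑ s ∈ Finset.range (t + 1), (max 1 (s:ℝ)) ^ (-β) * (qt t) ^ (t - s) with hSdef
    have hqt0 : 0 < qt t := Real.exp_pos _
    have hS_nonneg : ∀ s ∈ Finset.range (t + 1),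
        0 ≤ (max 1 (s:ℝ)) ^ (-β) * (qt t) ^ (t - s) := fun s _ =>
      mul_nonneg (Real.rpow_nonneg (le_trans zero_le_one (le_max_left _ _)) _)
        (pow_nonneg hqt0.le _)
    have hS0 : (qt t) ^ t ≤ S := by
      have hmem : (0:ℕ) ∈ Finset.range (t + 1) := Finset.mem_range.mpr (by omega)
      have := Finset.single_le_sum hS_nonneg hmem
      simpa using this
    have h1 : frobNorm (X (t + 1) * Q)
        ≤ frobNorm (X 0) * specNorm (ordProd M 0 t * Q)
          + ∑ s ∈ Finset.range (t + 1), frobNorm (B s) * specNorm (ordProd M (s + 1) t * Q) := by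
      rw [hX t]
      calc frobNorm (X 0 * (ordProd M 0 t * Q)
            + ∑ s ∈ Finset.range (t + 1), B s * (ordProd M (s + 1) t * Q))
          ≤ frobNorm (X 0 * (ordProd M 0 t * Q))
            + frobNorm (∑ s ∈ Finset.range (t + 1), B s * (ordProd M (s + 1) t * Q)) :=
            frobNorm_add_le _ _
        _ ≤ frobNorm (X 0) * specNorm (ordProd M 0 t * Q)
            + ∑ s ∈ Finset.range (t + 1), frobNorm (B s * (ordProd M (s + 1) t * Q)) := by
            apply add_le_add (frobNorm_mul_le _ _) (frobNorm_sum_le _ _)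
        _ ≤ frobNorm (X 0) * specNorm (ordProd M 0 t * Q)
            + ∑ s ∈ Finset.range (t + 1), frobNorm (B s) * specNorm (ordProd M (s + 1) t * Q) := by
            apply add_le_add le_rfl
            exact Finset.sum_le_sum fun s _ => frobNorm_mul_le _ _
    have h2 : frobNorm (X 0) * specNorm (ordProd M 0 t * Q)
        ≤ frobNorm (X 0) * (Real.exp Xbar * (qt t) ^ t) :=
      mul_le_mul_of_nonneg_left (hspec0 t) (frobNorm_nonneg _)
    have h3 : ∑ s ∈ Finset.range (t + 1), frobNorm (B s) * specNorm (ordProd M (s + 1) t * Q)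
        ≤ ∑ s ∈ Finset.range (t + 1),
          (Cb * (max 1 (s:ℝ)) ^ (-β)) * (Real.exp Xbar * (qt t) ^ (t - s)) := by
      apply Finset.sum_le_sum
      intro s hs
      have hst : s ≤ t := by
        simp only [Finset.mem_range] at hs; omega
      exact mul_le_mul (hB s) (hspec_main t s hst) (specNorm_nonneg _)
        (mul_nonneg hCb0 (Real.rpow_nonneg (le_trans zero_le_one (le_max_left _ _)) _))
    have h4 : ∑ s ∈ Finset.range (t + 1),
          (Cb * (max 1 (s:ℝ)) ^ (-β)) * (Real.exp Xbar * (qt t) ^ (t - s))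
        = Real.exp Xbar * Cb * S := by
      rw [hSdef, Finset.mul_sum]
      apply Finset.sum_congr rfl
      intro s _
      ring
    have h5 : frobNorm (X 0) * (Real.exp Xbar * (qt t) ^ t)
        ≤ Real.exp Xbar * frobNorm (X 0) * S := by
      have := mul_le_mul_of_nonneg_left hS0
        (mul_nonneg (Real.exp_pos Xbar).le (frobNorm_nonneg (X 0)))
      calc frobNorm (X 0) * (Real.exp Xbar * (qt t) ^ t)
          = Real.exp Xbar * frobNorm (X 0) * (qt t) ^ t := by ring
        _ ≤ Real.exp Xbar * frobNorm (X 0) * S := this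
    have hSK := hker t ht
    rw [← hSdef] at hSK
    have hS_nn : 0 ≤ S := Finset.sum_nonneg hS_nonneg
    calc frobNorm (X (t + 1) * Q)
        ≤ frobNorm (X 0) * specNorm (ordProd M 0 t * Q)
          + ∑ s ∈ Finset.range (t + 1), frobNorm (B s) * specNorm (ordProd M (s + 1) t * Q) := h1
      _ ≤ Real.exp Xbar * frobNorm (X 0) * S + Real.exp Xbar * Cb * S := by
          have := le_trans h3 (le_of_eq h4)
          linarith [le_trans h2 h5]
      _ = Real.exp Xbar * (frobNorm (X 0) + Cb) * S := by ring
      _ ≤ Real.exp Xbar * (frobNorm (X 0) + Cb) * (K₁ * (t:ℝ) ^ (α - β)) := by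
          apply mul_le_mul_of_nonneg_left hSK
          exact mul_nonneg (Real.exp_pos Xbar).le (add_nonneg (frobNorm_nonneg _) hCb0)
  -- conclude
  rw [Asymptotics.isBigO_iff]
  refine ⟨Real.exp Xbar * (frobNorm (X 0) + Cb) * K₁ * 2 ^ (β - α), ?_⟩
  rw [Filter.eventually_atTop]
  refine ⟨3, fun t ht => ?_⟩
  obtain ⟨u, rfl⟩ : ∃ u, t = u + 1 := ⟨t - 1, by omega⟩
  have hu2 : 2 ≤ u := by omega
  have h := hfb u hu2
  have hu0 : (0:ℝ) < u := by
    have : (0:ℕ) < u := by omega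
    exact_mod_cast this
  have huR : (2:ℝ) ≤ u := by exact_mod_cast hu2
  have hcast : ((u + 1 : ℕ) : ℝ) = (u:ℝ) + 1 := by push_cast; ring
  have hmono : (u:ℝ) ^ (α - β) ≤ 2 ^ (β - α) * ((u:ℝ) + 1) ^ (α - β) := by
    have h1 : ((u:ℝ) + 1) / 2 ≤ (u:ℝ) := by linarith
    have h2 : (u:ℝ) ^ (α - β) ≤ (((u:ℝ) + 1) / 2) ^ (α - β) :=
      Real.rpow_le_rpow_of_nonpos (by linarith) h1 (by linarith)
    have h3 : (((u:ℝ) + 1) / 2) ^ (α - β) = ((u:ℝ) + 1) ^ (α - β) / 2 ^ (α - β) :=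
      Real.div_rpow (by linarith) (by norm_num) _
    have h4 : (2:ℝ) ^ (α - β) = ((2:ℝ) ^ (β - α))⁻¹ := by
      rw [← Real.rpow_neg (by norm_num)]
      congr 1
      ring
    rw [h3, h4] at h2
    rw [div_inv_eq_mul] at h2
    nlinarith [h2]
  have hDnn : 0 ≤ Real.exp Xbar * (frobNorm (X 0) + Cb) * K₁ :=
    mul_nonneg (mul_nonneg (Real.exp_pos Xbar).le
      (add_nonneg (frobNorm_nonneg _) hCb0)) hK₁.le
  rw [Real.norm_eq_abs, Real.norm_eq_abs, abs_of_nonneg (frobNorm_nonneg _),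
    abs_of_nonneg (Real.rpow_nonneg (by positivity) _)]
  calc frobNorm (X (u + 1) * Q)
      ≤ Real.exp Xbar * (frobNorm (X 0) + Cb) * (K₁ * (u:ℝ) ^ (α - β)) := h
    _ = Real.exp Xbar * (frobNorm (X 0) + Cb) * K₁ * (u:ℝ) ^ (α - β) := by ring
    _ ≤ Real.exp Xbar * (frobNorm (X 0) + Cb) * K₁ * (2 ^ (β - α) * ((u:ℝ) + 1) ^ (α - β)) :=
        mul_le_mul_of_nonneg_left hmono hDnn
    _ = Real.exp Xbar * (frobNorm (X 0) + Cb) * K₁ * 2 ^ (β - α) * (((u + 1 : ℕ) : ℝ)) ^ (α - β) := by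
        rw [hcast]; ring
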